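/- (Steinitz lemma, with constant c(r) = r.) Let ‖·‖ be any norm on ℝ^r and let x_1,…,x_n ∈ ℝ^r satisfy Σ_{i=1}^n x_i = 0 and ‖x_i‖ ≤ 1 for each i. Then there exists a permutation π of {1,…,n} such that for every k ∈ {1,…,n} the partial sum satisfies ‖Σ_{j=1}^k x_{π(j)}‖ ≤ r. -/

import Mathlib

open Finset



section
variable {r n : ℕ} {N : (Fin r → ℝ) → ℝ}
  (hN_add : ∀ x y, N (x + y) ≤ N x + N y)
  (hN_smul : ∀ (c : ℝ) (x), N (c • x) = |c| * N x)

include hN_smul in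
lemma N_zero' : N 0 = 0 := by
  have := hN_smul 0 0; simpa using this

include hN_add hN_smul in
lemma N_sum_le' {ι : Type*} (s : Finset ι) (c : ι → ℝ) (y : ι → Fin r → ℝ)
    (hc : ∀ i ∈ s, 0 ≤ c i) (hy : ∀ i ∈ s, N (y i) ≤ 1) :
    N (∑ i ∈ s, c i • y i) ≤ ∑ i ∈ s, c i := by
  classical
  induction s using Finset.induction with
  | empty => simp [N_zero' hN_smul]
  | insert _ _ hni ih =>
    rename_i a s
    rw [Finset.sum_insert hni, Finset.sum_insert hni]
    refine le_trans (hN_add _ _) ?_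
    have h1 : N (c a • y a) ≤ c a := by
      rw [hN_smul, abs_of_nonneg (hc a (by simp))]
      have := hy a (by simp)
      nlinarith [hc a (mem_insert_self a s)]
    have h2 := ih (fun i hi => hc i (mem_insert_of_mem hi)) (fun i hi => hy i (mem_insert_of_mem hi))
    linarith

include hN_add hN_smul in
lemma feas_bound' (x : Fin n → Fin r → ℝ) (hnorm : ∀ i, N (x i) ≤ 1)
    (A : Finset (Fin n)) (lam : Fin n → ℝ)
    (h01 : ∀ i ∈ A, 0 ≤ lam i ∧ lam i ≤ 1)
    (hs : ∑ i ∈ A, lam i = (A.card : ℝ) - r)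
    (hx : ∑ i ∈ A, lam i • x i = 0) :
    N (∑ i ∈ A, x i) ≤ r := by
  have key : ∑ i ∈ A, x i = ∑ i ∈ A, (1 - lam i) • x i := by
    rw [Finset.sum_congr rfl (fun i _ => by rw [sub_smul, one_smul] :
      ∀ i ∈ A, (1 - lam i) • x i = x i - lam i • x i), Finset.sum_sub_distrib, hx, sub_zero]
  rw [key]
  refine le_trans (N_sum_le' hN_add hN_smul A _ _ (fun i hi => by linarith [(h01 i hi).2])
    (fun i _ => hnorm i)) ?_
  rw [Finset.sum_sub_distrib, hs]
  simp

include hN_add hN_smul in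
lemma N_list_sum_le' (x : Fin n → Fin r → ℝ) (hnorm : ∀ i, N (x i) ≤ 1)
    (l : List (Fin n)) : N ((l.map x).sum) ≤ l.length := by
  induction l with
  | nil => simp [N_zero' hN_smul]
  | cons a t ih =>
    simp only [List.map_cons, List.sum_cons, List.length_cons]
    refine le_trans (hN_add _ _) ?_
    push_cast
    linarith [hnorm a]

end

lemma step_lemma {r n : ℕ} (x : Fin n → Fin r → ℝ)
    (A : Finset (Fin n)) (hA : r < A.card)
    (lam : Fin n → ℝ) (h01 : ∀ i ∈ A, 0 ≤ lam i ∧ lam i ≤ 1)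
    (hs : ∑ i ∈ A, lam i = (A.card : ℝ) - r)
    (hx : ∑ i ∈ A, lam i • x i = 0) :
    ∃ i₀ ∈ A, ∃ mu : Fin n → ℝ, (∀ i ∈ A, 0 ≤ mu i ∧ mu i ≤ 1) ∧ mu i₀ = 0 ∧
      (∑ i ∈ A, mu i = (A.card : ℝ) - 1 - r) ∧ ∑ i ∈ A, mu i • x i = 0 := by
  classical
  set k := A.card with hk
  have hk1 : (1:ℝ) ≤ (k:ℝ) - r := by
    have : (r:ℝ) + 1 ≤ k := by exact_mod_cast hA
    linarith
  set P : Set (Fin n → ℝ) := {μ | (∀ i, i ∉ A → μ i = 0) ∧ (∀ i ∈ A, 0 ≤ μ i ∧ μ i ≤ 1) ∧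
      (∑ i ∈ A, μ i = (k:ℝ) - 1 - r) ∧ (∑ i ∈ A, μ i • x i = 0)} with hP
  -- nonempty
  have hPne : P.Nonempty := by
    set c1 : ℝ := ((k:ℝ) - 1 - r) / ((k:ℝ) - r) with hc1
    have hden : (0:ℝ) < (k:ℝ) - r := by linarith
    have hc10 : 0 ≤ c1 := div_nonneg (by linarith) hden.le
    have hc11 : c1 ≤ 1 := by rw [div_le_one hden]; linarith
    refine ⟨fun i => if i ∈ A then c1 * lam i else 0, ?_, ?_, ?_, ?_⟩
    · intro i hi; exact if_neg hi
    · intro i hi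
      obtain ⟨h0, h1⟩ := h01 i hi
      simp only [if_pos hi]
      exact ⟨mul_nonneg hc10 h0, by nlinarith⟩
    · rw [Finset.sum_congr rfl (fun i hi => if_pos hi), ← Finset.mul_sum, hs, hc1,
        div_mul_cancel₀ _ (ne_of_gt hden)]
    · have : ∑ i ∈ A, (if i ∈ A then c1 * lam i else 0) • x i
          = c1 • ∑ i ∈ A, lam i • x i := by
        rw [Finset.smul_sum]
        exact Finset.sum_congr rfl (fun i hi => by rw [if_pos hi, mul_smul])
      rw [this, hx, smul_zero]
  -- compact
  have hPsub : P ⊆ Set.Icc (0 : Fin n → ℝ) 1 := by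
    rintro μ ⟨hsupp, hbox, -, -⟩
    constructor <;> intro i
    · by_cases hi : i ∈ A
      · exact (hbox i hi).1
      · simp [hsupp i hi]
    · by_cases hi : i ∈ A
      · exact (hbox i hi).2
      · simp [hsupp i hi]
  have hPcl : IsClosed P := by
    have h1 : IsClosed {μ : Fin n → ℝ | ∀ i, i ∉ A → μ i = 0} := by
      have : {μ : Fin n → ℝ | ∀ i, i ∉ A → μ i = 0}
          = ⋂ i ∈ {i | i ∉ A}, {μ : Fin n → ℝ | μ i = 0} := by ext; simp
      rw [this]
      exact isClosed_biInter fun i _ => isClosed_eq (continuous_apply i) continuous_const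
    have h2 : IsClosed {μ : Fin n → ℝ | ∀ i ∈ A, 0 ≤ μ i ∧ μ i ≤ 1} := by
      have : {μ : Fin n → ℝ | ∀ i ∈ A, 0 ≤ μ i ∧ μ i ≤ 1}
          = ⋂ i ∈ A, ({μ : Fin n → ℝ | 0 ≤ μ i} ∩ {μ | μ i ≤ 1}) := by
        ext μ; simp only [Set.mem_setOf_eq, Set.mem_iInter, Set.mem_inter_iff]
      rw [this]
      exact isClosed_biInter fun i _ =>
        (isClosed_le continuous_const (continuous_apply i)).inter
          (isClosed_le (continuous_apply i) continuous_const)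
    have h3 : IsClosed {μ : Fin n → ℝ | ∑ i ∈ A, μ i = (k:ℝ) - 1 - r} :=
      isClosed_eq (continuous_finset_sum _ fun i _ => continuous_apply i) continuous_const
    have h4 : IsClosed {μ : Fin n → ℝ | ∑ i ∈ A, μ i • x i = 0} :=
      isClosed_eq (continuous_finset_sum _ fun i _ => (continuous_apply i).smul continuous_const)
        continuous_const
    have : P = {μ : Fin n → ℝ | ∀ i, i ∉ A → μ i = 0} ∩
        ({μ | ∀ i ∈ A, 0 ≤ μ i ∧ μ i ≤ 1} ∩
         ({μ | ∑ i ∈ A, μ i = (k:ℝ) - 1 - r} ∩ {μ | ∑ i ∈ A, μ i • x i = 0})) := by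
      ext μ; simp only [hP, Set.mem_setOf_eq, Set.mem_inter_iff]
    rw [this]
    exact h1.inter (h2.inter (h3.inter h4))
  have hPc : IsCompact P := IsCompact.of_isClosed_subset isCompact_Icc hPcl hPsub
  have hgc : Continuous (fun μ : Fin n → ℝ => ∑ i ∈ A, μ i * (1 - μ i)) :=
    continuous_finset_sum _ fun i _ =>
      (continuous_apply i).mul (continuous_const.sub (continuous_apply i))
  obtain ⟨μ, hμP, hmin⟩ := hPc.exists_isMinOn hPne hgc.continuousOn
  obtain ⟨hsupp, hbox, hsum1, hsumx⟩ := hμP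
  have claim : ∃ i₀ ∈ A, μ i₀ = 0 := by
    by_contra hcon
    push_neg at hcon
    set F := A.filter (fun i => μ i < 1) with hF
    have hFA : F ⊆ A := Finset.filter_subset _ _
    have hFprop : ∀ i ∈ F, 0 < μ i ∧ μ i < 1 := by
      intro i hi
      rw [hF, Finset.mem_filter] at hi
      exact ⟨lt_of_le_of_ne (hbox i hi.1).1 (Ne.symm (hcon i hi.1)), hi.2⟩
    -- |F| ≤ r + 1
    have hFcard : F.card ≤ r + 1 := by
      by_contra hbig
      push_neg at hbig
      -- the family (1, x i), i ∈ F, is linearly dependent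
      have hnli : ¬ LinearIndependent ℝ (fun i : ↥F => (Fin.cons 1 (x i) : Fin (r+1) → ℝ)) := by
        intro hli
        have := hli.fintype_card_le_finrank
        rw [Module.finrank_pi] at this
        simp only [Fintype.card_coe, Fintype.card_fin] at this
        omega
      rw [Fintype.not_linearIndependent_iff] at hnli
      obtain ⟨g, hg0, j₀, hj₀⟩ := hnli
      set v : Fin n → ℝ := fun i => if h : i ∈ F then g ⟨i, h⟩ else 0 with hv
      have hvF : ∀ i, i ∉ F → v i = 0 := fun i hi => dif_neg hi
      have hvsum : ∑ i ∈ F, v i = 0 := by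
        have h0 := congrFun hg0 0
        simp only [Finset.sum_apply, Pi.smul_apply, Fin.cons_zero, smul_eq_mul, mul_one,
          Pi.zero_apply] at h0
        rw [← Finset.sum_coe_sort F v]
        calc ∑ i : ↥F, v ↑i = ∑ i : ↥F, g i := by
              refine Finset.sum_congr rfl fun i _ => ?_
              simp [hv, i.2]
          _ = 0 := h0
      have hvx : ∑ i ∈ F, v i • x i = 0 := by
        funext j
        have h0 := congrFun hg0 j.succ
        simp only [Finset.sum_apply, Pi.smul_apply, Fin.cons_succ, smul_eq_mul,
          Pi.zero_apply] at h0
        rw [← Finset.sum_coe_sort F (fun i => v i • x i)]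
        simp only [Finset.sum_apply, Pi.smul_apply, smul_eq_mul, Pi.zero_apply]
        calc ∑ i : ↥F, v ↑i * x ↑i j = ∑ i : ↥F, g i * x ↑i j := by
              refine Finset.sum_congr rfl fun i _ => ?_
              simp [hv, i.2]
          _ = 0 := h0
      have hj₀F : (j₀ : Fin n) ∈ F := j₀.2
      have hvj₀ : v j₀ ≠ 0 := by simpa [hv, dif_pos j₀.2] using hj₀
      have hFne : F.Nonempty := ⟨j₀, hj₀F⟩
      set δ : ℝ := F.inf' hFne (fun i => min (μ i) (1 - μ i)) with hδdef
      have hδ : 0 < δ := by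
        rw [hδdef, Finset.lt_inf'_iff]
        intro i hi
        obtain ⟨a, b⟩ := hFprop i hi
        exact lt_min a (by linarith)
      set M : ℝ := F.sup' hFne (fun i => |v i|) with hMdef
      have hM : 0 < M := by
        rw [hMdef, Finset.lt_sup'_iff]
        exact ⟨j₀, hj₀F, abs_pos.mpr hvj₀⟩
      set ε : ℝ := δ / M with hεdef
      have hε : 0 < ε := div_pos hδ hM
      have hkey : ∀ i ∈ F, ε * |v i| ≤ min (μ i) (1 - μ i) := by
        intro i hi
        have h1 : |v i| ≤ M := Finset.le_sup' (fun i => |v i|) hi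
        have h2 : δ ≤ min (μ i) (1 - μ i) := Finset.inf'_le _ hi
        calc ε * |v i| ≤ ε * M := by
              apply mul_le_mul_of_nonneg_left h1 hε.le
          _ = δ := by rw [hεdef]; exact div_mul_cancel₀ _ (ne_of_gt hM)
          _ ≤ _ := h2
      -- membership of perturbations
      have hmem : ∀ s : ℝ, s = 1 ∨ s = -1 →
          (fun i => μ i + s * (ε * v i)) ∈ P := by
        intro s hs1
        have habs : |s| = 1 := by rcases hs1 with h | h <;> simp [h]
        refine ⟨?_, ?_, ?_, ?_⟩
        · intro i hi
          show μ i + s * (ε * v i) = 0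
          rw [hsupp i hi, hvF i (fun h => hi (hFA h))]
          ring
        · intro i hi
          show 0 ≤ μ i + s * (ε * v i) ∧ μ i + s * (ε * v i) ≤ 1
          by_cases hiF : i ∈ F
          · have hb := hkey i hiF
            have : |s * (ε * v i)| ≤ min (μ i) (1 - μ i) := by
              rw [abs_mul, habs, one_mul, abs_mul, abs_of_pos hε]
              exact hb
            have h1 := abs_le.mp this
            have hm1 : min (μ i) (1 - μ i) ≤ μ i := min_le_left _ _
            have hm2 : min (μ i) (1 - μ i) ≤ 1 - μ i := min_le_right _ _
            exact ⟨by linarith [h1.1], by linarith [h1.2]⟩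
          · rw [hvF i hiF]
            simpa using hbox i hi
        · show ∑ i ∈ A, (μ i + s * (ε * v i)) = (k:ℝ) - 1 - r
          have : ∑ i ∈ A, (μ i + s * (ε * v i)) = (∑ i ∈ A, μ i) + s * ε * (∑ i ∈ A, v i) := by
            rw [Finset.mul_sum, ← Finset.sum_add_distrib]
            exact Finset.sum_congr rfl fun i _ => by ring
          rw [this, hsum1]
          have : ∑ i ∈ A, v i = 0 := by
            rw [← Finset.sum_subset hFA (fun i _ hi => hvF i hi)]
            exact hvsum
          rw [this]; ring
        · show ∑ i ∈ A, (μ i + s * (ε * v i)) • x i = 0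
          have : ∑ i ∈ A, (μ i + s * (ε * v i)) • x i
              = (∑ i ∈ A, μ i • x i) + (s * ε) • (∑ i ∈ A, v i • x i) := by
            rw [Finset.smul_sum, ← Finset.sum_add_distrib]
            refine Finset.sum_congr rfl fun i _ => ?_
            rw [add_smul, smul_smul]
            ring_nf
          rw [this, hsumx]
          have : ∑ i ∈ A, v i • x i = 0 := by
            rw [← Finset.sum_subset hFA (fun i _ hi => by rw [hvF i hi, zero_smul])]
            exact hvx
          rw [this, smul_zero, add_zero]
      have hp := hmin (hmem 1 (Or.inl rfl))
      have hm' := hmin (hmem (-1) (Or.inr rfl))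
      simp only [Set.mem_setOf_eq] at hp hm'
      have hsq : 0 < ∑ i ∈ A, (ε * v i)^2 := by
        apply Finset.sum_pos' (fun i _ => sq_nonneg _)
        exact ⟨j₀, hFA hj₀F, by positivity⟩
      have hiden : (∑ i ∈ A, (μ i + 1 * (ε * v i)) * (1 - (μ i + 1 * (ε * v i))))
          + (∑ i ∈ A, (μ i + (-1) * (ε * v i)) * (1 - (μ i + (-1) * (ε * v i))))
          = 2 * (∑ i ∈ A, μ i * (1 - μ i)) - 2 * ∑ i ∈ A, (ε * v i)^2 := by
        rw [← Finset.sum_add_distrib, Finset.mul_sum, Finset.mul_sum, ← Finset.sum_sub_distrib]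
        exact Finset.sum_congr rfl fun i _ => by ring
      have hgp : (∑ i ∈ A, μ i * (1 - μ i)) ≤
          ∑ i ∈ A, (μ i + 1 * (ε * v i)) * (1 - (μ i + 1 * (ε * v i))) := hp
      have hgm : (∑ i ∈ A, μ i * (1 - μ i)) ≤
          ∑ i ∈ A, (μ i + (-1) * (ε * v i)) * (1 - (μ i + (-1) * (ε * v i))) := hm'
      linarith
    -- counting argument
    have hones : ∀ i ∈ A.filter (fun i => ¬ μ i < 1), μ i = 1 := by
      intro i hi
      rw [Finset.mem_filter] at hi
      exact le_antisymm (hbox i hi.1).2 (not_lt.mp hi.2)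
    have hsplit : (∑ i ∈ F, μ i) + (∑ i ∈ A.filter (fun i => ¬ μ i < 1), μ i)
        = (k:ℝ) - 1 - r := by rw [Finset.sum_filter_add_sum_filter_not A _ μ, hsum1]
    have hcards : F.card + (A.filter (fun i => ¬ μ i < 1)).card = k :=
      Finset.card_filter_add_card_filter_not _
    have honesval : (∑ i ∈ A.filter (fun i => ¬ μ i < 1), μ i)
        = ((A.filter (fun i => ¬ μ i < 1)).card : ℝ) := by
      rw [Finset.sum_congr rfl hones]
      simp
    rcases Finset.eq_empty_or_nonempty F with hFe | hFne
    · rw [hFe] at hcards hsplit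
      simp only [Finset.sum_empty, Finset.card_empty, zero_add] at hcards hsplit
      rw [honesval, hcards] at hsplit
      have : (0:ℝ) ≤ r := Nat.cast_nonneg r
      linarith
    · have hpos : 0 < ∑ i ∈ F, μ i :=
        Finset.sum_pos (fun i hi => (hFprop i hi).1) hFne
      have hlt : (∑ i ∈ F, μ i) < F.card := by
        calc (∑ i ∈ F, μ i) < ∑ i ∈ F, (1:ℝ) :=
              Finset.sum_lt_sum_of_nonempty hFne (fun i hi => (hFprop i hi).2)
          _ = F.card := by simp
      have hcr : ((F.card:ℝ)) + ((A.filter (fun i => ¬ μ i < 1)).card : ℝ) = (k:ℝ) := by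
        exact_mod_cast hcards
      have hFle : ((F.card:ℝ)) ≤ (r:ℝ) + 1 := by exact_mod_cast hFcard
      rw [honesval] at hsplit
      linarith
  obtain ⟨i₀, hi₀A, hi₀⟩ := claim
  exact ⟨i₀, hi₀A, μ, hbox, hi₀, hsum1, hsumx⟩

lemma build_list' {r n : ℕ} {N : (Fin r → ℝ) → ℝ}
    (hN_add : ∀ x y, N (x + y) ≤ N x + N y)
    (hN_smul : ∀ (c : ℝ) (x), N (c • x) = |c| * N x)
    (x : Fin n → Fin r → ℝ) (hnorm : ∀ i, N (x i) ≤ 1) :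
    ∀ m : ℕ, ∀ A : Finset (Fin n), A.card = m →
    (A.card ≤ r ∨ ∃ lam : Fin n → ℝ, (∀ i ∈ A, 0 ≤ lam i ∧ lam i ≤ 1) ∧
      (∑ i ∈ A, lam i = (A.card:ℝ) - r) ∧ ∑ i ∈ A, lam i • x i = 0) →
    ∃ l : List (Fin n), l.Nodup ∧ l.toFinset = A ∧
      ∀ k ≤ l.length, N (((l.take k).map x).sum) ≤ r := by
  classical
  have easy : ∀ A : Finset (Fin n), A.card ≤ r →
      ∃ l : List (Fin n), l.Nodup ∧ l.toFinset = A ∧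
        ∀ k ≤ l.length, N (((l.take k).map x).sum) ≤ r := by
    intro A hle
    refine ⟨A.toList, Finset.nodup_toList A, Finset.toList_toFinset A, ?_⟩
    intro k hk
    refine le_trans (N_list_sum_le' hN_add hN_smul x hnorm _) ?_
    have h1 : (A.toList.take k).length ≤ A.toList.length := by
      simpa using List.length_take_le k A.toList
    have h2 : A.toList.length = A.card := Finset.length_toList A
    have : (A.toList.take k).length ≤ r := by omega
    exact_mod_cast this
  intro m
  induction m with
  | zero =>
    intro A hcard _
    exact easy A (by omega)
  | succ m ih =>
    intro A hcard hfeas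
    by_cases hr : A.card ≤ r
    · exact easy A hr
    push_neg at hr
    obtain ⟨lam, h01, hs, hx⟩ := hfeas.resolve_left (by omega)
    obtain ⟨i₀, hi₀A, mu, hmu01, hmu0, hmusum, hmux⟩ :=
      step_lemma x A hr lam h01 hs hx
    have hcard' : (A.erase i₀).card = m := by
      rw [Finset.card_erase_of_mem hi₀A]; omega
    have hfeasE : (A.erase i₀).card ≤ r ∨ ∃ lam' : Fin n → ℝ,
        (∀ i ∈ A.erase i₀, 0 ≤ lam' i ∧ lam' i ≤ 1) ∧
        (∑ i ∈ A.erase i₀, lam' i = ((A.erase i₀).card:ℝ) - r) ∧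
        ∑ i ∈ A.erase i₀, lam' i • x i = 0 := by
      refine Or.inr ⟨mu, fun i hi => hmu01 i (Finset.mem_of_mem_erase hi), ?_, ?_⟩
      · rw [Finset.sum_erase A hmu0, hmusum, hcard', hcard]
        push_cast; ring
      · rw [Finset.sum_erase A (by rw [hmu0, zero_smul])]
        exact hmux
    obtain ⟨l', hnd', htf', hbd'⟩ := ih (A.erase i₀) hcard' hfeasE
    have hi₀nl : i₀ ∉ l' := by
      intro hmem
      have : i₀ ∈ A.erase i₀ := htf' ▸ List.mem_toFinset.mpr hmem
      exact (Finset.notMem_erase i₀ A) this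
    refine ⟨l' ++ [i₀], ?_, ?_, ?_⟩
    · rw [List.nodup_append]
      exact ⟨hnd', List.nodup_singleton i₀, by
        intro a ha b hb hab; simp only [List.mem_singleton] at hb; subst hb; subst hab; exact hi₀nl ha⟩
    · rw [List.toFinset_append, List.toFinset_cons, List.toFinset_nil, htf']
      rw [Finset.union_comm]
      simpa using Finset.insert_erase hi₀A
    · intro k hk
      rw [List.length_append, List.length_singleton] at hk
      by_cases hkl : k ≤ l'.length
      · rw [List.take_append_of_le_length hkl]
        exact hbd' k hkl
      · have hlen2 : (l' ++ [i₀]).length ≤ k := by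
          rw [List.length_append, List.length_singleton]; omega
        rw [List.take_of_length_le hlen2, List.map_append, List.sum_append]
        simp only [List.map_cons, List.map_nil, List.sum_cons, List.sum_nil, add_zero]
        have hconv : (l'.map x).sum = ∑ i ∈ A.erase i₀, x i := by
          rw [← List.sum_toFinset x hnd', htf']
        rw [hconv, Finset.sum_erase_add A x hi₀A]
        exact feas_bound' hN_add hN_smul x hnorm A lam h01 hs hx


/-- **Steinitz lemma with constant `r`.** For any norm `N` on `ℝ^r`
and vectors `x₁,…,xₙ` of norm at most `1` summing to `0`, there is a permutation
such that every partial sum has norm at most `r`. -/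
theorem steinitz_lemma
    (r n : ℕ)
    (N : (Fin r → ℝ) → ℝ)
    (hN_add : ∀ x y, N (x + y) ≤ N x + N y)
    (hN_smul : ∀ (c : ℝ) (x), N (c • x) = |c| * N x)
    (hN_def : ∀ x, N x = 0 → x = 0)
    (x : Fin n → Fin r → ℝ)
    (hsum : ∑ i, x i = 0)
    (hnorm : ∀ i, N (x i) ≤ 1) :
    ∃ π : Equiv.Perm (Fin n), ∀ k : ℕ, k ≤ n →
      N (∑ j ∈ Finset.filter (fun j : Fin n => (j : ℕ) < k) Finset.univ, x (π j)) ≤ r := by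
  classical
  have hcardU : (Finset.univ : Finset (Fin n)).card = n := by simp
  have hfeas : (Finset.univ : Finset (Fin n)).card ≤ r ∨ ∃ lam : Fin n → ℝ,
      (∀ i ∈ (Finset.univ : Finset (Fin n)), 0 ≤ lam i ∧ lam i ≤ 1) ∧
      (∑ i ∈ (Finset.univ : Finset (Fin n)), lam i = ((Finset.univ : Finset (Fin n)).card:ℝ) - r) ∧
      ∑ i ∈ (Finset.univ : Finset (Fin n)), lam i • x i = 0 := by
    by_cases hnr : n ≤ r
    · exact Or.inl (by omega)
    · push_neg at hnr
      have hn0 : (0:ℝ) < n := by exact_mod_cast Nat.zero_lt_of_lt hnr -- r < n so n > 0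
      have hrn : (r:ℝ) < n := by exact_mod_cast hnr
      refine Or.inr ⟨fun _ => ((n:ℝ) - r)/n, fun i _ => ⟨?_, ?_⟩, ?_, ?_⟩
      · exact div_nonneg (by linarith) hn0.le
      · rw [div_le_one hn0]; linarith [Nat.cast_nonneg (α := ℝ) r]
      · rw [Finset.sum_const, hcardU, nsmul_eq_mul]
        field_simp
      · rw [← Finset.smul_sum, hsum, smul_zero]
  obtain ⟨l, hnd, htf, hbd⟩ := build_list' hN_add hN_smul x hnorm n Finset.univ hcardU hfeas
  have hlen : l.length = n := by
    rw [← List.toFinset_card_of_nodup hnd, htf]; simp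
  set e : Fin n → Fin n := fun j => l.get (Fin.cast hlen.symm j) with he
  have hinj : Function.Injective e :=
    (List.nodup_iff_injective_get.mp hnd).comp (Fin.cast_injective _)
  have hbij : Function.Bijective e := Finite.injective_iff_bijective.mp hinj
  refine ⟨Equiv.ofBijective e hbij, ?_⟩
  have key : ∀ k, k ≤ n → ∑ j ∈ Finset.filter (fun j : Fin n => (j:ℕ) < k) Finset.univ, x (e j)
      = ((l.take k).map x).sum := by
    intro k
    induction k with
    | zero => intro _; simp
    | succ k ihk =>
      intro hk1
      have hk0 : k ≤ n := by omega
      have hkn : k < n := hk1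
      have hkl : k < l.length := by omega
      have hfilter : Finset.filter (fun j : Fin n => (j:ℕ) < k+1) Finset.univ
          = insert ⟨k, hkn⟩ (Finset.filter (fun j : Fin n => (j:ℕ) < k) Finset.univ) := by
        ext j
        simp only [Finset.mem_filter, Finset.mem_insert, Finset.mem_univ, true_and, Fin.ext_iff]
        omega
      rw [hfilter, Finset.sum_insert (by simp)]
      have htake : l.take (k+1) = l.take k ++ [l.get ⟨k, hkl⟩] := by
        rw [List.take_succ]
        congr
        rw [List.getElem?_eq_getElem hkl]
        rfl
      rw [htake, List.map_append, List.sum_append, ihk hk0]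
      simp only [List.map_cons, List.map_nil, List.sum_cons, List.sum_nil, add_zero]
      have : e ⟨k, hkn⟩ = l.get ⟨k, hkl⟩ := rfl
      rw [this, add_comm]
  intro k hk
  have heq : ∑ j ∈ Finset.filter (fun j : Fin n => (j:ℕ) < k) Finset.univ,
      x ((Equiv.ofBijective e hbij) j) = ((l.take k).map x).sum := by
    rw [← key k hk]
    rfl
  rw [heq]
  exact hbd k (by omega)
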